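/- Suppose a group H acts on a set X, and there exist subsets U⁺, U⁻, V⁺, V⁻ of X, a point x ∈ X, and elements f, g ∈ H such that: (1) x ∉ U⁺ ∪ U⁻ ∪ V⁺ ∪ V⁻; (2) f({x} ∪ U⁺ ∪ V⁺ ∪ V⁻) ⊆ U⁺; (3) f⁻¹({x} ∪ U⁻ ∪ V⁺ ∪ V⁻) ⊆ U⁻; (4) g({x} ∪ U⁺ ∪ U⁻ ∪ V⁺) ⊆ V⁺; (5) g⁻¹({x} ∪ U⁺ ∪ U⁻ ∪ V⁻) ⊆ V⁻. Then the subgroup generated by f and g is free of rank 2. -/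

import Mathlib

/-- A reduced word stays reduced after removing its first letter. -/
lemma reduced_tail {α : Type*} [DecidableEq α] (p : α × Bool) (L : List (α × Bool))
    (h : FreeGroup.reduce (p :: L) = p :: L) : FreeGroup.reduce L = L := by
  have h1 : FreeGroup.Red (p :: L) (p :: FreeGroup.reduce L) :=
    FreeGroup.Red.cons_cons FreeGroup.reduce.red
  have h2 := FreeGroup.reduce.min (L₁ := p :: L) (h ▸ h1)
  rw [h] at h2
  exact (List.cons.injEq .. ▸ h2).2.symm

/-- **Tits ping-pong criterion** (Lemma 3.4.1): if a group `H` acts on a set `X` and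
there are subsets `U⁺, U⁻, V⁺, V⁻`, a point `x`, and elements `f, g` satisfying the
ping-pong inclusions, then the subgroup generated by `f` and `g` is free of rank two. -/
theorem stmt1 {H X : Type*} [Group H] [MulAction H X]
    (Up Um Vp Vm : Set X) (x : X) (f g : H)
    (h1 : x ∉ Up ∪ Um ∪ Vp ∪ Vm)
    (h2 : (f • ·) '' ({x} ∪ Up ∪ Vp ∪ Vm) ⊆ Up)
    (h3 : (f⁻¹ • ·) '' ({x} ∪ Um ∪ Vp ∪ Vm) ⊆ Um)
    (h4 : (g • ·) '' ({x} ∪ Up ∪ Um ∪ Vp) ⊆ Vp)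
    (h5 : (g⁻¹ • ·) '' ({x} ∪ Up ∪ Um ∪ Vm) ⊆ Vm) :
    Nonempty (FreeGroup (Fin 2) ≃* (Subgroup.closure {f, g} : Subgroup H)) := by
  classical
  set a : Fin 2 → H := ![f, g] with ha
  -- ping-pong tables
  set S : Fin 2 → Bool → Set X := fun i b =>
    if i = 0 then (if b then Up else Um) else (if b then Vp else Vm) with hS
  -- the letter-to-group-element map
  set e : Fin 2 × Bool → H := fun p => cond p.2 (a p.1) (a p.1)⁻¹ with he
  -- the single-step lemma
  have step : ∀ (i : Fin 2) (b : Bool) (y : X),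
      (y = x ∨ ∃ j c, ¬ (j = i ∧ c = !b) ∧ y ∈ S j c) →
      e (i, b) • y ∈ S i b := by
    intro i b
    rcases (by decide : ∀ i : Fin 2, i = 0 ∨ i = 1) i with rfl | rfl <;> cases b <;>
      intro y hy <;>
      simp only [he, ha, hS, cond_true, cond_false, Matrix.cons_val_zero,
        Matrix.cons_val_one, Matrix.head_cons] <;>
      rcases hy with rfl | ⟨j, c, hjc, hy⟩ <;>
      [ (exact h3 ⟨y, by simp, rfl⟩); skip;
        (exact h2 ⟨y, by simp, rfl⟩); skip;
        (exact h5 ⟨y, by simp, rfl⟩); skip;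
        (exact h4 ⟨y, by simp, rfl⟩); skip ] <;>
      rcases (by decide : ∀ j : Fin 2, j = 0 ∨ j = 1) j with rfl | rfl <;> cases c <;>
      first
      | (exfalso; revert hjc; decide)
      | (simp [hS] at hy
         first
         | exact h2 ⟨y, by simp [hy], rfl⟩
         | exact h3 ⟨y, by simp [hy], rfl⟩
         | exact h4 ⟨y, by simp [hy], rfl⟩
         | exact h5 ⟨y, by simp [hy], rfl⟩)
  -- main induction
  have main : ∀ (L : List (Fin 2 × Bool)), FreeGroup.reduce L = L →
      ∀ i b, L.head? = some (i, b) → (L.map e).prod • x ∈ S i b := by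
    intro L
    induction L with
    | nil => intro _ i b h; simp at h
    | cons p L' ih =>
      intro hred i b hhead
      obtain rfl : p = (i, b) := by simpa using hhead
      have hred' : FreeGroup.reduce L' = L' := reduced_tail _ _ hred
      have hprod : ((((i, b)) :: L').map e).prod • x = e (i, b) • ((L'.map e).prod • x) := by
        simp [mul_smul]
      rw [hprod]
      rcases L' with _ | ⟨⟨j, c⟩, rest⟩
      · simpa using step i b x (Or.inl rfl)
      · have hy : (List.map e ((j, c) :: rest)).prod • x ∈ S j c := ih hred' j c rfl
        have hjc : ¬ (j = i ∧ c = !b) := by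
          rintro ⟨rfl, rfl⟩
          exact FreeGroup.reduce.not (L₂ := []) hred
        exact step i b _ (Or.inr ⟨j, c, hjc, hy⟩)
  -- injectivity of the lift
  have hinj : Function.Injective (FreeGroup.lift a) := by
    rw [injective_iff_map_eq_one]
    intro w hw
    by_contra hne
    have hWred : FreeGroup.reduce w.toWord = w.toWord := FreeGroup.reduce_toWord w
    have hWne : w.toWord ≠ [] := fun h => hne (by
      have := FreeGroup.mk_toWord (x := w); rw [h] at this; simpa [FreeGroup.one_eq_mk] using this.symm)
    obtain ⟨⟨i, b⟩, rest, hL⟩ := List.exists_cons_of_ne_nil hWne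
    have hlift : FreeGroup.lift a w = (w.toWord.map e).prod := by
      conv_lhs => rw [← FreeGroup.mk_toWord (x := w)]
      rw [FreeGroup.lift_mk]
    have hx : x ∈ S i b := by
      have := main w.toWord hWred i b (by rw [hL]; rfl)
      rwa [← hlift, hw, one_smul] at this
    rcases (by decide : ∀ i : Fin 2, i = 0 ∨ i = 1) i with rfl | rfl <;> cases b <;>
      simp only [hS] at hx <;> simp_all <;> exact h1 (by simp [hx])
  -- assemble the equivalence
  have hrange : (FreeGroup.lift a).range = Subgroup.closure {f, g} := by
    rw [FreeGroup.range_lift_eq_closure]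
    congr 1
    ext y
    simp [ha, Fin.exists_fin_two, or_comm]
  exact ⟨(MonoidHom.ofInjective hinj).trans (MulEquiv.subgroupCongr hrange)⟩
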